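/- For every natural number a, the constant term of the Laurent polynomial ∏_{1 ≤ i ≠ j ≤ 3} (1 - x_i/x_j)^a in the three variables x_1, x_2, x_3 equals the multinomial coefficient (3a)!/(a!)^3. -/

import Mathlib

set_option maxRecDepth 8000

open MvPolynomial Finset

namespace DysonThree

noncomputable def Q (a b c : ℕ) : MvPolynomial (Fin 3) ℚ :=
  (X 1 - X 0) ^ a * (X 2 - X 0) ^ a * (X 0 - X 1) ^ b * (X 2 - X 1) ^ b *
    (X 0 - X 2) ^ c * (X 1 - X 2) ^ c

noncomputable def T (a b c : ℕ) : Fin 3 →₀ ℕ :=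
  Finsupp.equivFunOnFinite.symm ![b + c, a + c, a + b]

lemma recQ (a b c : ℕ) : Q (a+1) (b+1) (c+1) =
    X 1 * (X 2 * Q a (b+1) (c+1)) + X 0 * (X 2 * Q (a+1) b (c+1))
      + X 0 * (X 1 * Q (a+1) (b+1) c) := by
  simp only [Q, pow_succ]; ring

lemma h1 : (finSuccEquiv ℚ 2) (X 1) = Polynomial.C (X 0) := by
  rw [show (1 : Fin 3) = Fin.succ 0 from rfl, finSuccEquiv_X_succ]

lemma h2 : (finSuccEquiv ℚ 2) (X 2) = Polynomial.C (X 1) := by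
  rw [show (2 : Fin 3) = Fin.succ 1 from rfl, finSuccEquiv_X_succ]

lemma h1' : (finSuccEquiv ℚ 1) (X 1) = Polynomial.C (X 0) := by
  rw [show (1 : Fin 2) = Fin.succ 0 from rfl, finSuccEquiv_X_succ]

lemma image_eq (b c : ℕ) : finSuccEquiv ℚ 2 (Q 0 b c) =
    ((Polynomial.X - Polynomial.C (X 0)) ^ b * (Polynomial.X - Polynomial.C (X 1)) ^ c)
      * Polynomial.C ((X 1 - X 0) ^ b * (X 0 - X 1) ^ c) := by
  simp only [Q, pow_zero, one_mul, map_mul, map_pow, map_sub, h1, h2, finSuccEquiv_X_zero]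
  ring

lemma Tcons (b c : ℕ) :
    T 0 b c = Finsupp.cons (b + c) (Finsupp.cons c (Finsupp.single 0 b)) := by
  ext i
  refine Fin.cases ?_ (fun j => ?_) i
  · rw [Finsupp.cons_zero]; simp [T]
  · rw [Finsupp.cons_succ]
    refine Fin.cases ?_ (fun k => ?_) j
    · rw [Finsupp.cons_zero]; simp [T]
    · rw [Finsupp.cons_succ]
      have : k = 0 := Subsingleton.elim _ _
      subst this; simp [T]

lemma inner (b c : ℕ) :
    MvPolynomial.coeff (Finsupp.cons c (Finsupp.single 0 b))
      ((X 1 - X 0 : MvPolynomial (Fin 2) ℚ) ^ (b + c))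
      = (-1 : ℚ)^(b+c) * (-1)^b * ((b+c).choose c) := by
  rw [← finSuccEquiv_coeff_coeff]
  have himg : finSuccEquiv ℚ 1 ((X 1 - X 0 : MvPolynomial (Fin 2) ℚ) ^ (b + c))
      = Polynomial.C ((-1 : MvPolynomial (Fin 1) ℚ)^(b+c)) *
        (Polynomial.X + Polynomial.C (-(X 0))) ^ (b+c) := by
    simp only [map_pow, map_sub, h1', finSuccEquiv_X_zero, map_neg, Polynomial.C_neg, map_one]
    rw [← mul_pow]; ring_nf
  rw [himg, Polynomial.coeff_C_mul, Polynomial.coeff_X_add_C_pow]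
  have hb : b + c - c = b := by omega
  rw [hb]
  have hC : ((-1 : MvPolynomial (Fin 1) ℚ)^(b+c) * ((-X 0) ^ b *
      (((b+c).choose c : ℕ) : MvPolynomial (Fin 1) ℚ)))
      = C ((-1:ℚ)^(b+c) * (-1)^b * ((b+c).choose c : ℚ)) * X 0 ^ b := by
    rw [neg_pow]
    simp only [map_mul, map_pow, map_neg, map_one, map_natCast]
    ring
  rw [hC, coeff_C_mul, MvPolynomial.coeff_X_pow]
  simp

lemma base (b c : ℕ) :
    MvPolynomial.coeff (T 0 b c) (Q 0 b c) = ((b+c).choose c : ℚ) := by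
  rw [Tcons, ← finSuccEquiv_coeff_coeff, image_eq, Polynomial.coeff_mul_C]
  have mon : ((Polynomial.X - Polynomial.C (X 0 : MvPolynomial (Fin 2) ℚ)) ^ b *
      (Polynomial.X - Polynomial.C (X 1)) ^ c).Monic :=
    ((Polynomial.monic_X_sub_C _).pow b).mul ((Polynomial.monic_X_sub_C _).pow c)
  have hdeg : ((Polynomial.X - Polynomial.C (X 0 : MvPolynomial (Fin 2) ℚ)) ^ b *
      (Polynomial.X - Polynomial.C (X 1)) ^ c).natDegree = b + c := by
    rw [Polynomial.Monic.natDegree_mul ((Polynomial.monic_X_sub_C _).pow b)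
      ((Polynomial.monic_X_sub_C _).pow c)]
    simp [Polynomial.natDegree_pow, Polynomial.natDegree_X_sub_C]
  have hone : ((Polynomial.X - Polynomial.C (X 0 : MvPolynomial (Fin 2) ℚ)) ^ b *
      (Polynomial.X - Polynomial.C (X 1)) ^ c).coeff (b+c) = 1 := by
    rw [← hdeg]; exact mon.coeff_natDegree
  rw [hone, one_mul]
  have hprod : ((X 1 - X 0 : MvPolynomial (Fin 2) ℚ))^b * (X 0 - X 1)^c
      = C ((-1:ℚ)^c) * (X 1 - X 0)^(b+c) := by
    rw [show (X 0 - X 1 : MvPolynomial (Fin 2) ℚ) = -(X 1 - X 0) from by ring, neg_pow,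
      pow_add]
    simp only [map_pow, map_neg, map_one]
    ring
  rw [hprod, coeff_C_mul, inner]
  have hs : (-1:ℚ)^c * ((-1:ℚ)^(b+c) * (-1:ℚ)^b) = 1 := by
    rw [← pow_add, ← pow_add]
    exact Even.neg_one_pow ⟨b + c, by ring⟩
  calc (-1:ℚ)^c * ((-1:ℚ)^(b+c) * (-1)^b * ((b+c).choose c))
      = ((-1:ℚ)^c * ((-1:ℚ)^(b+c) * (-1:ℚ)^b)) * ((b+c).choose c) := by ring
    _ = ((b+c).choose c : ℚ) := by rw [hs, one_mul]

lemma swap01_Q (a b c : ℕ) :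
    rename (⇑(Equiv.swap (0 : Fin 3) 1)) (Q a b c) = Q b a c := by
  have e0 : (Equiv.swap (0 : Fin 3) 1) 0 = 1 := by decide
  have e1 : (Equiv.swap (0 : Fin 3) 1) 1 = 0 := by decide
  have e2 : (Equiv.swap (0 : Fin 3) 1) 2 = 2 := by decide
  simp only [Q, map_mul, map_pow, map_sub, rename_X, e0, e1, e2]
  ring

lemma swap02_Q (a b c : ℕ) :
    rename (⇑(Equiv.swap (0 : Fin 3) 2)) (Q a b c) = Q c b a := by
  have e0 : (Equiv.swap (0 : Fin 3) 2) 0 = 2 := by decide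
  have e1 : (Equiv.swap (0 : Fin 3) 2) 1 = 1 := by decide
  have e2 : (Equiv.swap (0 : Fin 3) 2) 2 = 0 := by decide
  simp only [Q, map_mul, map_pow, map_sub, rename_X, e0, e1, e2]
  ring

lemma swap01_T (a b c : ℕ) :
    Finsupp.mapDomain (⇑(Equiv.swap (0 : Fin 3) 1)) (T a b c) = T b a c := by
  rw [← Finsupp.equivMapDomain_eq_mapDomain]
  ext i; fin_cases i <;>
    simp [Finsupp.equivMapDomain_apply, T, Equiv.swap_apply_def] <;> ring

lemma swap02_T (a b c : ℕ) :
    Finsupp.mapDomain (⇑(Equiv.swap (0 : Fin 3) 2)) (T a b c) = T c b a := by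
  rw [← Finsupp.equivMapDomain_eq_mapDomain]
  ext i; fin_cases i <;>
    simp [Finsupp.equivMapDomain_apply, T, Equiv.swap_apply_def] <;> ring

lemma symm01 (a b c : ℕ) :
    MvPolynomial.coeff (T a b c) (Q a b c) = MvPolynomial.coeff (T b a c) (Q b a c) := by
  have := coeff_rename_mapDomain (⇑(Equiv.swap (0 : Fin 3) 1)) (Equiv.injective _)
    (Q a b c) (T a b c)
  rw [swap01_Q, swap01_T] at this
  exact this.symm

lemma symm02 (a b c : ℕ) :
    MvPolynomial.coeff (T a b c) (Q a b c) = MvPolynomial.coeff (T c b a) (Q c b a) := by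
  have := coeff_rename_mapDomain (⇑(Equiv.swap (0 : Fin 3) 2)) (Equiv.injective _)
    (Q a b c) (T a b c)
  rw [swap02_Q, swap02_T] at this
  exact this.symm

lemma choose_eq_fact (b c : ℕ) :
    ((b+c).choose c : ℚ) = ((b+c).factorial : ℚ) / (b.factorial * c.factorial) := by
  have h := Nat.choose_mul_factorial_mul_factorial (show c ≤ b + c by omega)
  rw [Nat.add_sub_cancel] at h
  have hb : (b.factorial : ℚ) ≠ 0 := Nat.cast_ne_zero.mpr (Nat.factorial_ne_zero b)
  have hc : (c.factorial : ℚ) ≠ 0 := Nat.cast_ne_zero.mpr (Nat.factorial_ne_zero c)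
  field_simp
  exact_mod_cast congrArg (Nat.cast (R := ℚ)) (by linarith [h] : (b+c).choose c * b.factorial * c.factorial = (b+c).factorial)

lemma hT1 (a b c : ℕ) :
    T (a+1) b c = Finsupp.single 1 1 + (Finsupp.single 2 1 + T a b c) := by
  ext i; fin_cases i <;> simp [T, Finsupp.single_apply, Finsupp.add_apply, -Finsupp.coe_add] <;> omega

lemma hT2 (a b c : ℕ) :
    T a (b+1) c = Finsupp.single 0 1 + (Finsupp.single 2 1 + T a b c) := by
  ext i; fin_cases i <;> simp [T, Finsupp.single_apply, Finsupp.add_apply, -Finsupp.coe_add] <;> omega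

lemma hT3 (a b c : ℕ) :
    T a b (c+1) = Finsupp.single 0 1 + (Finsupp.single 1 1 + T a b c) := by
  ext i; fin_cases i <;> simp [T, Finsupp.single_apply, Finsupp.add_apply, -Finsupp.coe_add] <;> omega

lemma alg (x y z F A B C : ℚ) (hA : A ≠ 0) (hB : B ≠ 0) (hC : C ≠ 0)
    (hx : x ≠ 0) (hy : y ≠ 0) (hz : z ≠ 0) :
    F/(A*(y*B)*(z*C)) + F/((x*A)*B*(z*C)) + F/((x*A)*(y*B)*C)
      = (x+y+z)*F/((x*A)*(y*B)*(z*C)) := by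
  field_simp

lemma main : ∀ n a b c : ℕ, a + b + c = n →
    MvPolynomial.coeff (T a b c) (Q a b c)
      = ((a+b+c).factorial : ℚ) / (a.factorial * b.factorial * c.factorial) := by
  intro n
  induction n using Nat.strong_induction_on with
  | _ n ih =>
    intro a b c hn
    rcases a with _ | a
    · rw [base, choose_eq_fact]
      simp
    · rcases b with _ | b
      · rw [symm01, base, choose_eq_fact]
        simp
      · rcases c with _ | c
        · rw [symm02, base, choose_eq_fact]
          rw [show (b+1)+(a+1) = (a+1)+(b+1)+0 from by omega]
          simp [Nat.factorial]
          ring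
        · -- inductive step
          have c1 : MvPolynomial.coeff (T (a+1) (b+1) (c+1)) (X 1 * (X 2 * Q a (b+1) (c+1)))
              = MvPolynomial.coeff (T a (b+1) (c+1)) (Q a (b+1) (c+1)) := by
            rw [hT1, coeff_X_mul, coeff_X_mul]
          have c2 : MvPolynomial.coeff (T (a+1) (b+1) (c+1)) (X 0 * (X 2 * Q (a+1) b (c+1)))
              = MvPolynomial.coeff (T (a+1) b (c+1)) (Q (a+1) b (c+1)) := by
            rw [hT2, coeff_X_mul, coeff_X_mul]
          have c3 : MvPolynomial.coeff (T (a+1) (b+1) (c+1)) (X 0 * (X 1 * Q (a+1) (b+1) c))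
              = MvPolynomial.coeff (T (a+1) (b+1) c) (Q (a+1) (b+1) c) := by
            rw [hT3, coeff_X_mul, coeff_X_mul]
          rw [recQ, coeff_add, coeff_add, c1, c2, c3]
          have k1 := ih (a + (b+1) + (c+1)) (by omega) a (b+1) (c+1) rfl
          have k2 := ih ((a+1) + b + (c+1)) (by omega) (a+1) b (c+1) rfl
          have k3 := ih ((a+1) + (b+1) + c) (by omega) (a+1) (b+1) c rfl
          rw [k1, k2, k3]
          have ea : ((a+1).factorial : ℚ) = (a+1) * a.factorial := by
            rw [Nat.factorial_succ]; push_cast; ring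
          have eb : ((b+1).factorial : ℚ) = (b+1) * b.factorial := by
            rw [Nat.factorial_succ]; push_cast; ring
          have ec : ((c+1).factorial : ℚ) = (c+1) * c.factorial := by
            rw [Nat.factorial_succ]; push_cast; ring
          have e1 : a + (b+1) + (c+1) = a+b+c+2 := by omega
          have e2 : (a+1) + b + (c+1) = a+b+c+2 := by omega
          have e3 : (a+1) + (b+1) + c = a+b+c+2 := by omega
          have e4 : (a+1) + (b+1) + (c+1) = (a+b+c+2)+1 := by omega
          have eTop : ((a+b+c+2+1).factorial : ℚ)
              = (((a:ℚ)+1)+((b:ℚ)+1)+((c:ℚ)+1)) * ((a+b+c+2).factorial : ℚ) := by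
            rw [Nat.factorial_succ, Nat.cast_mul]; push_cast; ring
          rw [e1, e2, e3, e4, eTop, ea, eb, ec]
          have hfa : (a.factorial : ℚ) ≠ 0 := Nat.cast_ne_zero.mpr (Nat.factorial_ne_zero a)
          have hfb : (b.factorial : ℚ) ≠ 0 := Nat.cast_ne_zero.mpr (Nat.factorial_ne_zero b)
          have hfc : (c.factorial : ℚ) ≠ 0 := Nat.cast_ne_zero.mpr (Nat.factorial_ne_zero c)
          have hF : ((a+b+c+2).factorial : ℚ) ≠ 0 := Nat.cast_ne_zero.mpr (Nat.factorial_ne_zero _)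
          have ha1 : ((a : ℚ) + 1) ≠ 0 := by positivity
          have hb1 : ((b : ℚ) + 1) ≠ 0 := by positivity
          have hc1 : ((c : ℚ) + 1) ≠ 0 := by positivity
          linear_combination alg ((a:ℚ)+1) ((b:ℚ)+1) ((c:ℚ)+1)
            (((a+b+c+2).factorial : ℚ)) (a.factorial : ℚ) (b.factorial : ℚ) (c.factorial : ℚ)
            hfa hfb hfc ha1 hb1 hc1

end DysonThree

open DysonThree in
/-- Dyson's constant term identity for `n = 3`: the constant term of
`∏_{1 ≤ i ≠ j ≤ 3} (1 - x_i/x_j)^a` equals `(3a)!/(a!)^3`.  Since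
`∏_{i ≠ j} (1 - x_i/x_j)^a = (x_1 x_2 x_3)^{-2a} ∏_{i ≠ j} (x_j - x_i)^a`,
this says the coefficient of `x_1^{2a} x_2^{2a} x_3^{2a}` in the polynomial
`∏_{i ≠ j} (x_j - x_i)^a` equals `(3a)!/(a!)^3`. -/
theorem stmt1 (a : ℕ) :
    MvPolynomial.coeff (Finsupp.equivFunOnFinite.symm fun _ : Fin 3 => 2 * a)
      (∏ p ∈ Finset.univ.filter (fun p : Fin 3 × Fin 3 => p.1 ≠ p.2),
        ((X p.2 - X p.1) ^ a : MvPolynomial (Fin 3) ℚ))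
      = ((3 * a).factorial : ℚ) / ((a.factorial : ℚ)) ^ 3 := by
  have hT : (Finsupp.equivFunOnFinite.symm fun _ : Fin 3 => 2 * a) = T a a a := by
    ext i; fin_cases i <;> simp [T] <;> omega
  have hfilter : Finset.univ.filter (fun p : Fin 3 × Fin 3 => p.1 ≠ p.2)
      = {((0:Fin 3),(1:Fin 3)), (0,2), (1,0), (1,2), (2,0), (2,1)} := by decide
  have hQ : (∏ p ∈ Finset.univ.filter (fun p : Fin 3 × Fin 3 => p.1 ≠ p.2),
      ((X p.2 - X p.1) ^ a : MvPolynomial (Fin 3) ℚ)) = Q a a a := by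
    rw [hfilter, Finset.prod_insert (by decide), Finset.prod_insert (by decide),
      Finset.prod_insert (by decide), Finset.prod_insert (by decide),
      Finset.prod_insert (by decide), Finset.prod_singleton]
    simp only [Q]
    ring
  rw [hT, hQ, DysonThree.main (a+a+a) a a a rfl, show a+a+a = 3*a from by ring]
  ring
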